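/- Suppose W is positive definite and ⟨ψ, V⁻¹ e₀⟩ ≠ 0, where e₀ ∈ ℝ^{n+1} is the first standard basis vector. Let β > 0 be a real number and define β' = ((V⁻¹)₀₀ / (W⁻¹)₀₀) · β, so that β' (W⁻¹)₀₀ = β (V⁻¹)₀₀. Then 0 < β' < β. (This is Eq. (37) of the paper: the critical parameter for a tipping point strictly decreases when one more bet-hedger is introduced.) -/

import Mathlib

open Matrix

/-- The `(n+2) × (n+2)` symmetric block matrix `W = [[V, ψ], [ψᵀ, α]]`. -/
def blockW (n : ℕ) (V : Matrix (Fin (n+1)) (Fin (n+1)) ℝ)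
    (ψ : Fin (n+1) → ℝ) (α : ℝ) :
    Matrix (Fin (n+1) ⊕ Fin 1) (Fin (n+1) ⊕ Fin 1) ℝ :=
  Matrix.fromBlocks V (Matrix.of fun i _ => ψ i) (Matrix.of fun _ j => ψ j)
    (Matrix.of fun _ _ => α)

/-- Eq. (37) of the paper: if `W = [[V, ψ], [ψᵀ, α]]` is positive definite and
`⟨ψ, V⁻¹ e₀⟩ ≠ 0`, then for `β > 0` the rescaled parameter
`β' = ((V⁻¹)₀₀ / (W⁻¹)₀₀) · β` (so that `β' (W⁻¹)₀₀ = β (V⁻¹)₀₀`) satisfies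
`0 < β' < β`. -/
theorem stmt6 (n : ℕ) (V : Matrix (Fin (n+1)) (Fin (n+1)) ℝ)
    (ψ : Fin (n+1) → ℝ) (α : ℝ)
    (hV : V.PosDef) (hW : (blockW n V ψ α).PosDef)
    (hψ : ψ ⬝ᵥ (V⁻¹ *ᵥ Pi.single 0 1) ≠ 0)
    (β : ℝ) (hβ : 0 < β) :
    0 < (V⁻¹ 0 0 / (blockW n V ψ α)⁻¹ (Sum.inl 0) (Sum.inl 0)) * β
    ∧ (V⁻¹ 0 0 / (blockW n V ψ α)⁻¹ (Sum.inl 0) (Sum.inl 0)) * β < β := by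
  classical
  set B : Matrix (Fin (n+1)) (Fin 1) ℝ := Matrix.of fun i _ => ψ i with hB
  set C : Matrix (Fin 1) (Fin (n+1)) ℝ := Matrix.of fun _ j => ψ j with hC
  set D : Matrix (Fin 1) (Fin 1) ℝ := Matrix.of fun _ _ => α with hD
  have hWB : blockW n V ψ α = Matrix.fromBlocks V B C D := rfl
  haveI : Invertible V := hV.isUnit.invertible
  have hinvV : ⅟V = V⁻¹ := invOf_eq_nonsing_inv V
  set S : Matrix (Fin 1) (Fin 1) ℝ := D - C * ⅟V * B with hS
  have hdet : (blockW n V ψ α).det = V.det * S.det := Matrix.det_fromBlocks₁₁ V B C D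
  have hS00 : 0 < S 0 0 := by
    have h1 : 0 < (blockW n V ψ α).det := hW.det_pos
    have h2 : 0 < V.det := hV.det_pos
    have hd : 0 < S.det := by
      by_contra h
      push_neg at h
      nlinarith [hdet, h1, h2]
    rwa [Matrix.det_fin_one] at hd
  haveI hSinv : Invertible S := S.invertibleOfIsUnitDet (by
    rw [Matrix.det_fin_one]; exact (ne_of_gt hS00).isUnit)
  haveI hWI : Invertible (Matrix.fromBlocks V B C D) := by
    rw [← hWB]; exact hW.isUnit.invertible
  have hWinv : (blockW n V ψ α)⁻¹ = ⅟(Matrix.fromBlocks V B C D) := by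
    rw [hWB]; exact (invOf_eq_nonsing_inv _).symm
  have hblock : ⅟(Matrix.fromBlocks V B C D) =
      Matrix.fromBlocks (⅟V + ⅟V * B * ⅟S * C * ⅟V) (-(⅟V * B * ⅟S))
        (-(⅟S * C * ⅟V)) (⅟S) := Matrix.invOf_fromBlocks₁₁_eq V B C D
  have hinvS00 : ⅟S 0 0 = (S 0 0)⁻¹ := by
    rw [invOf_eq_nonsing_inv, Matrix.inv_def, Matrix.adjugate_fin_one, Matrix.det_fin_one]
    simp
  have hsymm : ∀ i j, V⁻¹ i j = V⁻¹ j i := by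
    intro i j
    have h := hV.inv.isHermitian.apply i j
    simpa using h.symm
  set t : ℝ := ψ ⬝ᵥ (V⁻¹ *ᵥ Pi.single 0 1) with ht
  have ht' : t = ∑ k, ψ k * V⁻¹ k 0 := by
    simp [ht, dotProduct, Matrix.mulVec, Pi.single_apply, Finset.mul_sum]
  have hentry : (blockW n V ψ α)⁻¹ (Sum.inl 0) (Sum.inl 0)
      = V⁻¹ 0 0 + t * (S 0 0)⁻¹ * t := by
    rw [hWinv, hblock]
    show (⅟V + ⅟V * B * ⅟S * C * ⅟V) 0 0 = _
    rw [hinvV, Matrix.add_apply]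
    congr 1
    have e1 : (V⁻¹ * B) 0 0 = ∑ k, V⁻¹ 0 k * ψ k := by
      simp [Matrix.mul_apply, hB]
    have e2 : (C * V⁻¹) 0 0 = ∑ k, ψ k * V⁻¹ k 0 := by
      simp [Matrix.mul_apply, hC]
    have e3 : (V⁻¹ * B * ⅟S * C * V⁻¹) 0 0
        = (V⁻¹ * B) 0 0 * ⅟S 0 0 * (C * V⁻¹) 0 0 := by
      rw [show V⁻¹ * B * ⅟S * C * V⁻¹ = (V⁻¹ * B) * ⅟S * (C * V⁻¹) by
        simp [Matrix.mul_assoc]]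
      rw [Matrix.mul_apply, Fin.sum_univ_one, Matrix.mul_apply, Fin.sum_univ_one]
    rw [e3, e1, e2, hinvS00, ht']
    congr 2
    exact Finset.sum_congr rfl fun k _ => by rw [hsymm 0 k, mul_comm]
  have hV00 : 0 < V⁻¹ 0 0 := by
    have h := hV.inv.dotProduct_mulVec_pos (x := Pi.single 0 1) (by
      intro h
      have h0 := congrFun h 0
      simp [Pi.single_apply] at h0)
    simpa [dotProduct, Matrix.mulVec, Pi.single_apply, Finset.mul_sum] using h
  have htne : t ≠ 0 := hψ
  have hgt : V⁻¹ 0 0 < (blockW n V ψ α)⁻¹ (Sum.inl 0) (Sum.inl 0) := by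
    rw [hentry]
    have h1 : 0 < (S 0 0)⁻¹ := inv_pos.mpr hS00
    have h2 : 0 < t * t := mul_self_pos.mpr htne
    nlinarith
  have hW00 : 0 < (blockW n V ψ α)⁻¹ (Sum.inl 0) (Sum.inl 0) := lt_trans hV00 hgt
  refine ⟨mul_pos (div_pos hV00 hW00) hβ, ?_⟩
  have hlt1 : V⁻¹ 0 0 / (blockW n V ψ α)⁻¹ (Sum.inl 0) (Sum.inl 0) < 1 :=
    (div_lt_one hW00).mpr hgt
  calc (V⁻¹ 0 0 / (blockW n V ψ α)⁻¹ (Sum.inl 0) (Sum.inl 0)) * β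
      < 1 * β := mul_lt_mul_of_pos_right hlt1 hβ
    _ = β := one_mul β
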